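/- Let m > 0. Define T(r) := −(1/2)·(r − 2m·log(1 + r/(2m))) for r > 0, and for r > 0, φ ∈ ℝ set Φ(r, φ) := (T(r), (r·cos φ, r·sin φ, 0)) ∈ ℝ × ℝ³. Then for every r > 0, φ ∈ ℝ, and (a, b) ∈ ℝ², the tangent vector a·∂Φ/∂r + b·∂Φ/∂φ, which has time component a·T'(r) = −(a/2)·(r/(r + 2m)) and spatial component a·(cos φ, sin φ, 0) + b·r·(−sin φ, cos φ, 0), satisfies Q_N(a·T'(r), a·(cos φ, sin φ, 0) + b·r·(−sin φ, cos φ, 0), (r·cos φ, r·sin φ, 0)) = (3r/(4(r + 2m)))·a² + r²·b². In particular every nonzero tangent vector to the surface S_T parametrized by Φ is spacelike. -/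

import Mathlib

/-- The negative-mass Schwarzschild quadratic form with mass parameter `m > 0`,
evaluated on a velocity `(t', x')` at a point with spatial part `x ≠ 0`. -/
noncomputable def QN (m : ℝ) (t' : ℝ) (x' x : EuclideanSpace ℝ (Fin 3)) : ℝ :=
  -(1 + 2 * m / ‖x‖) * t' ^ 2 + ‖x'‖ ^ 2
    - (2 * m / ((‖x‖ + 2 * m) * ‖x‖ ^ 2)) * (inner ℝ x x' : ℝ) ^ 2

/-- The vector `(a, b, c)` of `ℝ³`, regarded as a point of Euclidean 3-space. -/
noncomputable def vec3 (a b c : ℝ) : EuclideanSpace ℝ (Fin 3) :=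
  (WithLp.equiv 2 (Fin 3 → ℝ)).symm ![a, b, c]

lemma vec3_smul (x a b c : ℝ) : x • vec3 a b c = vec3 (x*a) (x*b) (x*c) := by
  ext i; fin_cases i <;> simp [vec3]

lemma vec3_add (a b c d e f : ℝ) : vec3 a b c + vec3 d e f = vec3 (a+d) (b+e) (c+f) := by
  ext i; fin_cases i <;> simp [vec3]

lemma vec3_inner (a b c d e f : ℝ) :
    (inner ℝ (vec3 a b c) (vec3 d e f) : ℝ) = a*d + b*e + c*f := by
  simp [vec3, PiLp.inner_apply, Fin.sum_univ_three]; ring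

lemma vec3_norm_sq (a b c : ℝ) : ‖vec3 a b c‖^2 = a^2 + b^2 + c^2 := by
  rw [← real_inner_self_eq_norm_sq, vec3_inner]; ring

/-- Let `m > 0`. Define `T(r) := −(1/2)·(r − 2m·log(1 + r/(2m)))` for `r > 0`, and
for `r > 0`, `φ ∈ ℝ` set `Φ(r, φ) := (T(r), (r·cos φ, r·sin φ, 0)) ∈ ℝ × ℝ³`. Then
for every `r > 0`, `φ ∈ ℝ`, and `(a, b) ∈ ℝ²`, the tangent vector
`a·∂Φ/∂r + b·∂Φ/∂φ`, which has time component `a·T'(r) = −(a/2)·(r/(r + 2m))` and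
spatial component `a·(cos φ, sin φ, 0) + b·r·(−sin φ, cos φ, 0)`, satisfies
`Q_N(...) = (3r/(4(r + 2m)))·a² + r²·b²`. In particular every nonzero tangent
vector to the surface `S_T` parametrized by `Φ` is spacelike. -/
theorem trapped_surface_tangents_spacelike (m : ℝ) (hm : 0 < m)
    (T : ℝ → ℝ) (hT : ∀ r : ℝ, T r = -(1 / 2) * (r - 2 * m * Real.log (1 + r / (2 * m))))
    (Φ : ℝ → ℝ → ℝ × EuclideanSpace ℝ (Fin 3))
    (hΦ : ∀ r φ : ℝ, Φ r φ = (T r, vec3 (r * Real.cos φ) (r * Real.sin φ) 0))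
    (r φ a b : ℝ) (hr : 0 < r) :
    HasDerivAt (fun ρ : ℝ => Φ ρ φ)
      (-(1 / 2) * (r / (r + 2 * m)), vec3 (Real.cos φ) (Real.sin φ) 0) r ∧
    HasDerivAt (fun ψ : ℝ => Φ r ψ)
      (0, vec3 (-(r * Real.sin φ)) (r * Real.cos φ) 0) φ ∧
    QN m (a * (-(1 / 2) * (r / (r + 2 * m))))
        (a • vec3 (Real.cos φ) (Real.sin φ) 0
          + b • vec3 (-(r * Real.sin φ)) (r * Real.cos φ) 0)
        (vec3 (r * Real.cos φ) (r * Real.sin φ) 0)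
      = (3 * r / (4 * (r + 2 * m))) * a ^ 2 + r ^ 2 * b ^ 2 ∧
    ((a, b) ≠ (0, 0) →
      0 < QN m (a * (-(1 / 2) * (r / (r + 2 * m))))
        (a • vec3 (Real.cos φ) (Real.sin φ) 0
          + b • vec3 (-(r * Real.sin φ)) (r * Real.cos φ) 0)
        (vec3 (r * Real.cos φ) (r * Real.sin φ) 0)) := by
  have hrm : (0:ℝ) < r + 2 * m := by positivity
  -- derivative of T
  have hTd : HasDerivAt T (-(1 / 2) * (r / (r + 2 * m))) r := by
    have hne : (1 : ℝ) + r / (2 * m) ≠ 0 := by positivity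
    have hlog : HasDerivAt (fun ρ : ℝ => Real.log (1 + ρ / (2 * m)))
        ((1 + r / (2 * m))⁻¹ * (1 / (2 * m))) r := by
      have h0 : HasDerivAt (fun ρ : ℝ => 1 + ρ / (2 * m)) (1 / (2 * m)) r := by
        simpa using (hasDerivAt_id r |>.div_const (2*m)).const_add 1
      exact (Real.hasDerivAt_log hne).comp r h0
    have h : HasDerivAt T (-(1/2) * (1 - 2 * m * ((1 + r / (2 * m))⁻¹ * (1 / (2 * m))))) r := by
      have := ((hasDerivAt_id r).sub ((hlog.const_mul (2*m)))).const_mul (-(1/2 : ℝ))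
      have hTf : T = fun ρ => -(1 / 2) * (ρ - 2 * m * Real.log (1 + ρ / (2 * m))) := funext hT
      rw [hTf]
      simpa using this
    convert h using 1
    field_simp
    ring
  -- spatial derivative in ρ
  have hsp1 : HasDerivAt (fun ρ : ℝ => vec3 (ρ * Real.cos φ) (ρ * Real.sin φ) 0)
      (vec3 (Real.cos φ) (Real.sin φ) 0) r := by
    have : HasDerivAt (fun ρ : ℝ => ρ • vec3 (Real.cos φ) (Real.sin φ) 0)
        ((1:ℝ) • vec3 (Real.cos φ) (Real.sin φ) 0) r :=
      (hasDerivAt_id r).smul_const _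
    simp only [vec3_smul, one_smul] at this
    simpa using this
  have hd1 : HasDerivAt (fun ρ : ℝ => Φ ρ φ)
      (-(1 / 2) * (r / (r + 2 * m)), vec3 (Real.cos φ) (Real.sin φ) 0) r := by
    have hΦf : (fun ρ : ℝ => Φ ρ φ)
        = fun ρ => (T ρ, vec3 (ρ * Real.cos φ) (ρ * Real.sin φ) 0) := funext fun ρ => hΦ ρ φ
    rw [hΦf]
    exact hTd.prodMk hsp1
  -- spatial derivative in ψ
  have hsp2 : HasDerivAt (fun ψ : ℝ => vec3 (r * Real.cos ψ) (r * Real.sin ψ) 0)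
      (vec3 (-(r * Real.sin φ)) (r * Real.cos φ) 0) φ := by
    have hc : HasDerivAt (fun ψ : ℝ => (r * Real.cos ψ) • vec3 1 0 0)
        ((r * -Real.sin φ) • vec3 1 0 0) φ :=
      ((Real.hasDerivAt_cos φ).const_mul r).smul_const _
    have hs : HasDerivAt (fun ψ : ℝ => (r * Real.sin ψ) • vec3 0 1 0)
        ((r * Real.cos φ) • vec3 0 1 0) φ :=
      ((Real.hasDerivAt_sin φ).const_mul r).smul_const _
    have := hc.add hs
    simp only [vec3_smul, vec3_add] at this ⊢
    convert this using 2
    · rfl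
    · rfl
    · rfl
    · simp only [Pi.add_apply, vec3_add]
      congr 1 <;> ring
    · ring
    · ring
    · ring
  have hd2 : HasDerivAt (fun ψ : ℝ => Φ r ψ)
      (0, vec3 (-(r * Real.sin φ)) (r * Real.cos φ) 0) φ := by
    have hΦf : (fun ψ : ℝ => Φ r ψ)
        = fun ψ => (T r, vec3 (r * Real.cos ψ) (r * Real.sin ψ) 0) := funext fun ψ => hΦ r ψ
    rw [hΦf]
    exact (hasDerivAt_const φ (T r)).prodMk hsp2
  -- norm of base point
  have hcs : Real.cos φ ^ 2 + Real.sin φ ^ 2 = 1 := by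
    rw [add_comm]; exact Real.sin_sq_add_cos_sq φ
  have hxnorm : ‖vec3 (r * Real.cos φ) (r * Real.sin φ) 0‖ = r := by
    have h2 : ‖vec3 (r * Real.cos φ) (r * Real.sin φ) 0‖ ^ 2 = r ^ 2 := by
      rw [vec3_norm_sq]; nlinarith [hcs]
    nlinarith [norm_nonneg (vec3 (r * Real.cos φ) (r * Real.sin φ) 0), hr, h2]
  -- the tangent vector
  have hx' : a • vec3 (Real.cos φ) (Real.sin φ) 0
          + b • vec3 (-(r * Real.sin φ)) (r * Real.cos φ) 0
      = vec3 (a * Real.cos φ + b * -(r * Real.sin φ)) (a * Real.sin φ + b * (r * Real.cos φ)) 0 := by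
    rw [vec3_smul, vec3_smul, vec3_add]; ring_nf
  have hQval : QN m (a * (-(1 / 2) * (r / (r + 2 * m))))
        (a • vec3 (Real.cos φ) (Real.sin φ) 0
          + b • vec3 (-(r * Real.sin φ)) (r * Real.cos φ) 0)
        (vec3 (r * Real.cos φ) (r * Real.sin φ) 0)
      = (3 * r / (4 * (r + 2 * m))) * a ^ 2 + r ^ 2 * b ^ 2 := by
    rw [QN, hx', hxnorm, vec3_norm_sq, vec3_inner]
    have e1 : (r * Real.cos φ) * (a * Real.cos φ + b * -(r * Real.sin φ))
        + (r * Real.sin φ) * (a * Real.sin φ + b * (r * Real.cos φ)) + 0 * 0 = a * r := by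
      linear_combination (a * r) * hcs
    have e2 : (a * Real.cos φ + b * -(r * Real.sin φ)) ^ 2
        + (a * Real.sin φ + b * (r * Real.cos φ)) ^ 2 + 0 ^ 2
        = a ^ 2 + b ^ 2 * r ^ 2 := by linear_combination (a ^ 2 + b ^ 2 * r ^ 2) * hcs
    rw [e1, e2]
    field_simp
    ring
  refine ⟨hd1, hd2, hQval, fun hab => ?_⟩
  rw [hQval]
  have h1 : 0 ≤ (3 * r / (4 * (r + 2 * m))) * a ^ 2 := by positivity
  have h2 : 0 ≤ r ^ 2 * b ^ 2 := by positivity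
  have hab' : a ≠ 0 ∨ b ≠ 0 := by
    by_contra h
    push_neg at h
    exact hab (by rw [h.1, h.2])
  rcases hab' with ha | hb
  · have : 0 < (3 * r / (4 * (r + 2 * m))) * a ^ 2 := by positivity
    linarith
  · have : 0 < r ^ 2 * b ^ 2 := by positivity
    linarith
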